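/- Let k ≥ 3 and u = 1^{k-1}2. Suppose the word w u-represents the labeled graph G = ([n], E), and let ij be an edge of G with i < j. Then the word w' = i^{k-2} (i+1)(i+2)...(j-1)(j+1)(j+2)...n i j (j+1)...n (i+1)(i+2)...n w u-represents the graph G' = ([n], E \ {ij}). -/

import Mathlib

/-- `red w` replaces each occurrence of the `i`-th smallest letter of `w` by `i`. -/
def red (w : List ℕ) : List ℕ :=
  w.map (fun x => (w.toFinset.filter (· < x)).card + 1)

/-- `w` has a `u`-match (starting at some position `i`): a factor of `w` of length `|u|`
whose reduction equals `red u` (which is `u` itself when `red u = u`). -/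
def HasMatch (u w : List ℕ) : Prop :=
  ∃ i, i + u.length ≤ w.length ∧ red ((w.drop i).take u.length) = red u

/-- The word `w` `u`-represents the labeled graph with vertex set `V` and adjacency `E`:
the letters occurring in `w` are exactly `V`, and two distinct vertices are adjacent
iff `w` restricted to these two letters has no `u`-match. -/
def Represents (u w : List ℕ) (V : Finset ℕ) (E : ℕ → ℕ → Prop) : Prop :=
  (∀ x, x ∈ w ↔ x ∈ V) ∧
  ∀ x ∈ V, ∀ y ∈ V, x ≠ y →
    (E x y ↔ ¬ HasMatch u (w.filter (fun z => z = x ∨ z = y)))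

section Helpers

lemma red_canonical {m a b : ℕ} (hm : m ≠ 0) (hab : a < b) :
    red (List.replicate m a ++ [b]) = List.replicate m 1 ++ [2] := by
  have htf : (List.replicate m a ++ [b]).toFinset = {a, b} := by
    ext c
    simp [List.mem_replicate, hm]; exact or_comm
  unfold red
  rw [htf, List.map_append, List.map_replicate]
  have ha : (({a, b} : Finset ℕ).filter (· < a)).card = 0 := by
    rw [Finset.card_eq_zero, Finset.filter_eq_empty_iff]
    intro c hc; simp at hc; rcases hc with rfl | rfl <;> simp <;> omega
  have hb : (({a, b} : Finset ℕ).filter (· < b)).card = 1 := by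
    rw [show ({a, b} : Finset ℕ).filter (· < b) = {a} from ?_]
    · simp
    · ext c; simp; constructor
      · rintro ⟨rfl | rfl, h⟩ <;> omega
      · rintro rfl; exact ⟨Or.inl rfl, hab⟩
  simp only [List.map_cons, List.map_nil]
  rw [ha, hb]

lemma red_eq_canonical {t : List ℕ} {m : ℕ} (hm : m ≠ 0)
    (h : red t = List.replicate m 1 ++ [2]) :
    ∃ a b, a < b ∧ t = List.replicate m a ++ [b] := by
  set f : ℕ → ℕ := fun x => (t.toFinset.filter (· < x)).card + 1 with hf
  have hlen : t.length = m + 1 := by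
    have := congrArg List.length h
    simpa [red] using this
  have hget : ∀ l (hl : l < m + 1), f (t[l]'(by omega)) = if l < m then 1 else 2 := by
    intro l hl
    have hl' : l < t.length := by omega
    have hlr : l < (red t).length := by simpa [red, hlen] using hl
    have h1 : (red t)[l]'hlr = f (t[l]'hl') := by
      simp [red, hf]
    have h2 := List.getElem_of_eq h hlr
    rw [h2] at h1
    rcases lt_or_ge l m with hlm | hlm
    · rw [List.getElem_append_left (by simpa using hlm), List.getElem_replicate] at h1
      rw [if_pos hlm, ← h1]
    · have heq : l = m := by omega
      subst heq
      rw [List.getElem_append_right (by simp)] at h1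
      simp at h1
      rw [if_neg (by omega), ← h1]
  have hsubset : ∀ x y : ℕ, x ≤ y → t.toFinset.filter (· < x) ⊆ t.toFinset.filter (· < y) := by
    intro x y hxy c hc
    simp only [Finset.mem_filter, decide_eq_true_eq] at hc ⊢
    exact ⟨hc.1, by omega⟩
  have hmono : ∀ x ∈ t, ∀ y, x < y → f x < f y := by
    intro x hx y hxy
    have hss : t.toFinset.filter (· < x) ⊂ t.toFinset.filter (· < y) := by
      constructor
      · exact hsubset _ _ (le_of_lt hxy)
      · intro hsub
        have hxmem : x ∈ t.toFinset.filter (· < y) := by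
          simp [List.mem_toFinset.2 hx, hxy]
        have := hsub hxmem
        simp at this
    have hcard := Finset.card_lt_card hss
    simp only [hf]
    exact Nat.add_lt_add_right hcard 1
  have hmono' : ∀ x y, x ≤ y → f x ≤ f y := by
    intro x y hxy
    have hcard := Finset.card_le_card (hsubset _ _ hxy)
    simp only [hf]
    exact Nat.add_le_add_right hcard 1
  have h0 : 0 < t.length := by omega
  have hmlt : m < t.length := by omega
  refine ⟨t[0], t[m], ?_, ?_⟩
  · by_contra hc
    push_neg at hc
    have h1 : f t[0] = 1 := by
      have := hget 0 (by omega); simpa [hm, Nat.pos_of_ne_zero hm] using this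
    have h2 : f t[m] = 2 := by have := hget m (by omega); simpa using this
    have := hmono' _ _ hc
    omega
  · apply List.ext_getElem (by simp [hlen])
    intro l hl hl'
    have hlm1 : l < m + 1 := by omega
    rcases lt_or_ge l m with hlm | hlm
    · rw [List.getElem_append_left (by simpa using hlm), List.getElem_replicate]
      have h1 : f t[l] = 1 := by have := hget l hlm1; simpa [hlm] using this
      have h0' : f t[0] = 1 := by
        have := hget 0 (by omega); simpa [Nat.pos_of_ne_zero hm] using this
      by_contra hne
      rcases lt_or_gt_of_ne hne with hlt | hgt
      · have := hmono _ (t.getElem_mem _) _ hlt; omega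
      · have := hmono _ (t.getElem_mem _) _ hgt; omega
    · have : l = m := by omega
      subst this
      rw [List.getElem_append_right (by simp)]
      simp

lemma hasMatch_iff {m : ℕ} (hm : m ≠ 0) (w : List ℕ) :
    HasMatch (List.replicate m 1 ++ [2]) w ↔
      ∃ a b, a < b ∧ (List.replicate m a ++ [b]) <:+: w := by
  have hul : (List.replicate m 1 ++ [2]).length = m + 1 := by simp
  have hredu : red (List.replicate m 1 ++ [2]) = List.replicate m 1 ++ [2] :=
    red_canonical hm one_lt_two
  constructor
  · rintro ⟨idx, h1, h2⟩
    rw [hul] at h1 h2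
    rw [hredu] at h2
    obtain ⟨a, b, hab, ht⟩ := red_eq_canonical hm h2
    refine ⟨a, b, hab, ?_⟩
    rw [← ht]
    exact ((List.take_prefix _ _).isInfix).trans (List.drop_suffix idx w).isInfix
  · rintro ⟨a, b, hab, s, e, heq⟩
    refine ⟨s.length, ?_, ?_⟩
    · rw [hul, ← heq]
      simp only [List.length_append, List.length_replicate, List.length_cons, List.length_nil]
      omega
    · have hdt : (w.drop s.length).take (List.replicate m 1 ++ [2]).length
          = List.replicate m a ++ [b] := by
        rw [hul, ← heq, show s ++ (List.replicate m a ++ [b]) ++ e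
          = s ++ ((List.replicate m a ++ [b]) ++ e) from by simp,
          List.drop_left]
        exact List.take_left' (by simp)
      rw [hdt, hredu]
      exact red_canonical hm hab

lemma cross {m : ℕ} (hm : m ≠ 0) (q v : List ℕ) (y : ℕ)
    (hv : ∀ c ∈ v, c ≤ y)
    (hp : ∀ a b, a < b → ¬ ((List.replicate m a ++ [b]) <:+: (q ++ [y])))
    (a b : ℕ) (hab : a < b) :
    (List.replicate m a ++ [b]) <:+: ((q ++ [y]) ++ v) ↔
      (List.replicate m a ++ [b]) <:+: v := by
  set p := q ++ [y] with hpdef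
  set t := List.replicate m a ++ [b] with htdef
  have htl : t.length = m + 1 := by simp [htdef]
  constructor
  · rintro ⟨s, e, heq⟩
    rcases le_or_gt (s.length + (m + 1)) p.length with hc1 | hc1
    · exfalso
      apply hp a b hab
      have hpeq : p = (s ++ t) ++ e.take (p.length - (s ++ t).length) := by
        have h1 : ((s ++ t) ++ e).take p.length = (p ++ v).take p.length := by rw [heq]
        rw [List.take_left' rfl] at h1
        rw [List.take_append, List.take_of_length_le
          (by simp [htl]; omega)] at h1
        exact h1.symm
      exact ⟨s, _, hpeq.symm⟩
    rcases le_or_gt p.length s.length with hc2 | hc2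
    · have h1 : (s ++ (t ++ e)).drop p.length = (p ++ v).drop p.length := by
        rw [← List.append_assoc, heq]
      rw [List.drop_left' rfl] at h1
      rw [List.drop_append, Nat.sub_eq_zero_of_le hc2,
        List.drop_zero] at h1
      exact ⟨s.drop p.length, e, by rw [← h1]; simp⟩
    · exfalso
      set s' := p.length - s.length with hs'
      have hs'1 : 1 ≤ s' := by omega
      have hs'm : s' ≤ m := by omega
      have hpeq : p = s ++ List.replicate s' a := by
        have h1 : (s ++ (t ++ e)).take p.length = (p ++ v).take p.length := by
          rw [← List.append_assoc, heq]
        rw [List.take_left' rfl] at h1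
        rw [List.take_append, List.take_of_length_le (le_of_lt hc2)] at h1
        rw [List.take_append] at h1
        have h2 : t.take (p.length - s.length) = List.replicate s' a := by
          rw [htdef, List.take_append, List.take_replicate,
            min_eq_left (by omega : p.length - s.length ≤ m),
            List.take_eq_nil_iff.mpr (Or.inl (by simp [htl]; omega))]
          simp [hs']
        rw [h2] at h1
        rw [List.take_eq_nil_iff.mpr (Or.inl (by simp [htl]; omega))] at h1
        simpa using h1.symm
      have hya : y = a := by
        have h1 : p.getLast? = some y := List.getLast?_concat
        have h2 : p.getLast? = some a := by
          rw [hpeq, show List.replicate s' a = List.replicate (s' - 1) a ++ [a] from by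
            rw [← List.replicate_succ']; congr 1; omega, ← List.append_assoc]
          exact List.getLast?_concat
        rw [h1] at h2
        exact Option.some_injective _ h2
      have hbv : b ∈ v := by
        have h1 : s ++ (t ++ e) = s ++ (List.replicate s' a ++ v) := by
          rw [← List.append_assoc, heq, hpeq, List.append_assoc]
        have h2 := List.append_cancel_left h1
        have hm' : m = s' + (m - s') := by omega
        have h3 : t ++ e = List.replicate s' a ++ ((List.replicate (m - s') a ++ [b]) ++ e) := by
          calc t ++ e = (List.replicate (s' + (m - s')) a ++ [b]) ++ e := by rw [htdef, ← hm']
            _ = _ := by rw [List.replicate_add]; simp only [List.append_assoc]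
        rw [h3] at h2
        have h4 := List.append_cancel_left h2
        rw [← h4]
        simp
      have := hv b hbv
      omega
  · rintro ⟨s, e, heq⟩
    exact ⟨p ++ s, e, by rw [← heq]; simp⟩

lemma transfer {m : ℕ} (hm : m ≠ 0) (q v : List ℕ) (y : ℕ)
    (hv : ∀ c ∈ v, c ≤ y)
    (hp : ∀ a b, a < b → ¬ ((List.replicate m a ++ [b]) <:+: (q ++ [y]))) :
    (HasMatch (List.replicate m 1 ++ [2]) ((q ++ [y]) ++ v) ↔
     HasMatch (List.replicate m 1 ++ [2]) v) := by
  rw [hasMatch_iff hm, hasMatch_iff hm]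
  exact exists_congr fun a => exists_congr fun b =>
    and_congr_right fun hab => cross hm q v y hv hp a b hab

lemma repl_infix_mem {m a b : ℕ} (hm : m ≠ 0) {p : List ℕ}
    (h : (List.replicate m a ++ [b]) <:+: p) : a ∈ p ∧ b ∈ p := by
  have hsub := h.subset
  constructor
  · exact hsub (by simp [List.mem_replicate, hm])
  · exact hsub (by simp)

lemma no_infix_const {m a0 : ℕ} (hm : m ≠ 0) {p : List ℕ} (hall : ∀ c ∈ p, c = a0) :
    ∀ a b, a < b → ¬ (List.replicate m a ++ [b]) <:+: p := by
  intro a b hab hinf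
  obtain ⟨ha, hb⟩ := repl_infix_mem hm hinf
  have := hall a ha
  have := hall b hb
  omega

lemma no_infix_alt {m : ℕ} (hm : 2 ≤ m) {x y : ℕ} (hxy : x < y) {p : List ℕ}
    (hsub : ∀ c ∈ p, c = x ∨ c = y)
    (hadj : List.Chain' (fun c d => ¬ (c = x ∧ d = x)) p) :
    ∀ a b, a < b → ¬ (List.replicate m a ++ [b]) <:+: p := by
  intro a b hab hinf
  obtain ⟨ha, hb⟩ := repl_infix_mem (by omega) hinf
  have hax : a = x := by
    rcases hsub a ha with rfl | rfl
    · rfl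
    · rcases hsub b hb with rfl | rfl <;> omega
  subst hax
  have hpair : [a, a] <:+: p := by
    refine List.IsInfix.trans ?_ hinf
    refine ⟨[], List.replicate (m - 2) a ++ [b], ?_⟩
    rw [List.nil_append, show List.replicate m a = [a, a] ++ List.replicate (m - 2) a from ?_]
    · simp
    · rw [show m = 2 + (m - 2) from by omega, List.replicate_add]
      simp [List.replicate_succ]
  have := hadj.infix hpair
  simp [List.isChain_cons_cons] at this

lemma no_infix_case34 {m i y : ℕ} (hm : 1 ≤ m) (hiy : i < y) (r' : List ℕ)
    (hsub : ∀ c ∈ r', c = i ∨ c = y) (hc : r'.count i ≤ 1) :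
    ∀ a b, a < b → ¬ (List.replicate (m + 1) a ++ [b]) <:+:
      (List.replicate m i ++ y :: r') := by
  intro a b hab hinf
  obtain ⟨ha, hb⟩ := repl_infix_mem (by omega) hinf
  have hmem : ∀ c, c ∈ List.replicate m i ++ y :: r' → c = i ∨ c = y := by
    intro c hcm
    simp only [List.mem_append, List.mem_replicate, List.mem_cons] at hcm
    rcases hcm with ⟨-, rfl⟩ | rfl | hr
    · exact Or.inl rfl
    · exact Or.inr rfl
    · exact hsub c hr
  have hax : a = i := by
    rcases hmem a ha with rfl | rfl
    · rfl
    · rcases hmem b hb with rfl | rfl <;> omega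
  have hby : b = y := by
    rcases hmem b hb with rfl | rfl
    · omega
    · rfl
  subst hax hby
  obtain ⟨s, e, heq⟩ := hinf
  have hcount := congrArg (List.count a) heq
  have hbne : (b == a) = false := by simp; omega
  simp only [List.count_append, List.count_replicate, List.count_cons, List.count_nil,
    beq_self_eq_true, if_true, hbne, if_false] at hcount
  have hse : s.count a = 0 := by omega
  cases s with
  | nil =>
    rw [List.nil_append, List.replicate_succ'] at heq
    simp only [List.append_assoc, List.cons_append, List.singleton_append,
      List.nil_append] at heq
    have h2 := List.append_cancel_left heq
    simp at h2
    omega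
  | cons c s' =>
    have hc' : c = a := by
      have hh : (List.replicate m a ++ b :: r').head? = some a := by
        rw [show m = (m - 1) + 1 from by omega, List.replicate_succ]
        simp
      rw [← heq] at hh
      simp at hh
      omega
    subst hc'
    simp [List.count_cons] at hse

lemma filter_replicate_pos {n c : ℕ} {f : ℕ → Bool} (h : f c = true) :
    (List.replicate n c).filter f = List.replicate n c := by
  induction n with
  | zero => simp
  | succ n ih => rw [List.replicate_succ, List.filter_cons_of_pos h, ih]

lemma filter_replicate_neg {n c : ℕ} {f : ℕ → Bool} (h : f c = false) :
    (List.replicate n c).filter f = [] := by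
  induction n with
  | zero => simp
  | succ n ih => rw [List.replicate_succ, List.filter_cons_of_neg (by simp [h]), ih]

lemma filter_range'_pair (x y : ℕ) (hxy : x < y) : ∀ (m a : ℕ),
    (List.range' a m).filter (fun z => z = x ∨ z = y) =
      (if a ≤ x ∧ x < a + m then [x] else []) ++ (if a ≤ y ∧ y < a + m then [y] else []) := by
  intro m
  induction m with
  | zero =>
    intro a
    rw [if_neg (by omega), if_neg (by omega)]
    simp
  | succ m ih =>
    intro a
    rw [List.range'_succ]
    by_cases hax : a = x
    · rw [List.filter_cons_of_pos (by simp [hax]), ih (a + 1)]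
      split_ifs <;> first | (exfalso; omega) | simp [hax]
    · by_cases hay : a = y
      · rw [List.filter_cons_of_pos (by simp [hay]), ih (a + 1)]
        split_ifs <;> first | (exfalso; omega) | simp [hay]
      · rw [List.filter_cons_of_neg (by simp [hax, hay]), ih (a + 1)]
        split_ifs <;> first | (exfalso; omega) | simp

lemma filter_replicate_pair (nn c x y : ℕ) :
    (List.replicate nn c).filter (fun z => z = x ∨ z = y) =
      if c = x ∨ c = y then List.replicate nn c else [] := by
  split_ifs with h
  · exact filter_replicate_pos (by simpa using h)
  · exact filter_replicate_neg (by simpa using h)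

lemma filter_pair_lit (c d x y : ℕ) :
    [c, d].filter (fun z => z = x ∨ z = y) =
      (if c = x ∨ c = y then [c] else []) ++ (if d = x ∨ d = y then [d] else []) := by
  by_cases h1 : c = x ∨ c = y <;> by_cases h2 : d = x ∨ d = y <;>
    simp [List.filter_cons, h1, h2]

end Helpers

set_option maxHeartbeats 2000000 in
theorem remove_edge_case_112 (k n : ℕ) (hk : 3 ≤ k)
    (E : ℕ → ℕ → Prop) (hsym : Symmetric E) (hirr : ∀ x, ¬ E x x)
    (w : List ℕ)
    (hw : Represents (List.replicate (k - 1) 1 ++ [2]) w (Finset.Icc 1 n) E)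
    (i j : ℕ) (hi : i ∈ Finset.Icc 1 n) (hj : j ∈ Finset.Icc 1 n) (hij : i < j)
    (he : E i j) :
    Represents (List.replicate (k - 1) 1 ++ [2])
      (List.replicate (k - 2) i ++ List.range' (i + 1) (j - 1 - i) ++
        List.range' (j + 1) (n - j) ++ [i, j] ++ List.range' (j + 1) (n - j) ++
        List.range' (i + 1) (n - i) ++ w)
      (Finset.Icc 1 n)
      (fun x y => E x y ∧ ¬ ((x = i ∧ y = j) ∨ (x = j ∧ y = i))) := by
  obtain ⟨hw1, hw2⟩ := hw
  rw [Finset.mem_Icc] at hi hj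
  have hkm : k - 1 ≠ 0 := by omega
  constructor
  · intro c
    constructor
    · intro h
      simp only [List.mem_append, List.mem_replicate, List.mem_range'_1, List.mem_cons,
        List.not_mem_nil, or_false] at h
      rcases h with ((((((⟨-, rfl⟩ | h) | h) | (rfl | rfl)) | h) | h) | hcw)
      · exact Finset.mem_Icc.2 (by omega)
      · exact Finset.mem_Icc.2 (by omega)
      · exact Finset.mem_Icc.2 (by omega)
      · exact Finset.mem_Icc.2 (by omega)
      · exact Finset.mem_Icc.2 (by omega)
      · exact Finset.mem_Icc.2 (by omega)
      · exact Finset.mem_Icc.2 (by omega)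
      · exact (hw1 c).1 hcw
    · intro hc
      exact List.mem_append.2 (Or.inr ((hw1 c).2 hc))
  · have key : ∀ x y : ℕ, 1 ≤ x → x ≤ n → 1 ≤ y → y ≤ n → x < y →
        ((E x y ∧ ¬ ((x = i ∧ y = j) ∨ (x = j ∧ y = i))) ↔
          ¬ HasMatch (List.replicate (k - 1) 1 ++ [2])
            ((List.replicate (k - 2) i ++ List.range' (i + 1) (j - 1 - i) ++
              List.range' (j + 1) (n - j) ++ [i, j] ++ List.range' (j + 1) (n - j) ++
              List.range' (i + 1) (n - i) ++ w).filter (fun z => z = x ∨ z = y))) := by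
      intro x y hx1 hxn hy1 hyn hxy
      have hv : ∀ c ∈ w.filter (fun z => z = x ∨ z = y), c ≤ y := by
        intro c hc
        rw [List.mem_filter] at hc
        have := hc.2
        simp at this
        omega
      have hEiff := hw2 x (Finset.mem_Icc.2 ⟨hx1, hxn⟩) y (Finset.mem_Icc.2 ⟨hy1, hyn⟩)
        (by omega)
      by_cases hA : x = i ∧ y = j
      · -- the removed edge
        obtain ⟨rfl, rfl⟩ := hA
        have hfilter : (List.replicate (k - 2) x ++ List.range' (x + 1) (y - 1 - x) ++
              List.range' (y + 1) (n - y) ++ [x, y] ++ List.range' (y + 1) (n - y) ++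
              List.range' (x + 1) (n - x) ++ w).filter (fun z => z = x ∨ z = y)
            = List.replicate (k - 2) x ++ [x, y, y] ++ w.filter (fun z => z = x ∨ z = y) := by
          simp only [List.filter_append]
          rw [filter_replicate_pair, filter_pair_lit, filter_range'_pair x y hxy,
            filter_range'_pair x y hxy, filter_range'_pair x y hxy]
          split_ifs <;> first | (exfalso; omega) | simp
        rw [hfilter]
        have hmatch : HasMatch (List.replicate (k - 1) 1 ++ [2])
            (List.replicate (k - 2) x ++ [x, y, y] ++ w.filter (fun z => z = x ∨ z = y)) := by
          rw [hasMatch_iff hkm]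
          refine ⟨x, y, hxy, [], [y] ++ w.filter (fun z => z = x ∨ z = y), ?_⟩
          rw [show k - 1 = (k - 2) + 1 from by omega, List.replicate_succ']
          simp
        constructor
        · rintro ⟨-, hno⟩
          exact absurd (Or.inl ⟨rfl, rfl⟩) hno
        · intro hno
          exact absurd hmatch hno
      · -- a non-removed pair
        have hpairs : ¬ ((x = i ∧ y = j) ∨ (x = j ∧ y = i)) := by omega
        rw [and_iff_left hpairs, hEiff]
        rcases Nat.lt_trichotomy y i with h1 | h1 | h1
        · -- case 1 : y < i
          have hfilter : (List.replicate (k - 2) i ++ List.range' (i + 1) (j - 1 - i) ++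
            List.range' (j + 1) (n - j) ++ [i, j] ++ List.range' (j + 1) (n - j) ++
            List.range' (i + 1) (n - i) ++ w).filter (fun z => z = x ∨ z = y)
              = w.filter (fun z => z = x ∨ z = y) := by
            simp only [List.filter_append]
            rw [filter_replicate_pair, filter_pair_lit, filter_range'_pair x y hxy,
              filter_range'_pair x y hxy, filter_range'_pair x y hxy]
            split_ifs <;> first | (exfalso; omega) | simp
          rw [hfilter]
        · -- case 2 : y = i
          have hfilter : (List.replicate (k - 2) i ++ List.range' (i + 1) (j - 1 - i) ++
            List.range' (j + 1) (n - j) ++ [i, j] ++ List.range' (j + 1) (n - j) ++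
            List.range' (i + 1) (n - i) ++ w).filter (fun z => z = x ∨ z = y)
              = ((List.replicate (k - 2) i) ++ [y]) ++ w.filter (fun z => z = x ∨ z = y) := by
            simp only [List.filter_append]
            rw [filter_replicate_pair, filter_pair_lit, filter_range'_pair x y hxy,
              filter_range'_pair x y hxy, filter_range'_pair x y hxy]
            split_ifs <;> first | (exfalso; omega) | simp [h1]
          refine not_congr ?_
          rw [hfilter]
          refine (transfer hkm (List.replicate (k - 2) i) (w.filter (fun z => z = x ∨ z = y)) y hv ?_).symm
          exact no_infix_const (a0 := y) hkm (by intro c hc; simp at hc; omega)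
        · -- i < y
          rcases Nat.lt_trichotomy x i with h2 | h2 | h2
          · -- x < i < y : cases 9a/9b/9c
            rcases Nat.lt_trichotomy y j with h3 | h3 | h3
            · -- 9a : y < j
              have hfilter : (List.replicate (k - 2) i ++ List.range' (i + 1) (j - 1 - i) ++
                List.range' (j + 1) (n - j) ++ [i, j] ++ List.range' (j + 1) (n - j) ++
                List.range' (i + 1) (n - i) ++ w).filter (fun z => z = x ∨ z = y)
                  = (([y]) ++ [y]) ++ w.filter (fun z => z = x ∨ z = y) := by
                simp only [List.filter_append]
                rw [filter_replicate_pair, filter_pair_lit, filter_range'_pair x y hxy,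
                  filter_range'_pair x y hxy, filter_range'_pair x y hxy]
                split_ifs <;> first | (exfalso; omega) | simp
              refine not_congr ?_
              rw [hfilter]
              refine (transfer hkm ([y]) (w.filter (fun z => z = x ∨ z = y)) y hv ?_).symm
              exact no_infix_const (a0 := y) hkm (by intro c hc; simp at hc; omega)
            · -- 9b : y = j
              have hfilter : (List.replicate (k - 2) i ++ List.range' (i + 1) (j - 1 - i) ++
                List.range' (j + 1) (n - j) ++ [i, j] ++ List.range' (j + 1) (n - j) ++
                List.range' (i + 1) (n - i) ++ w).filter (fun z => z = x ∨ z = y)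
                  = (([y]) ++ [y]) ++ w.filter (fun z => z = x ∨ z = y) := by
                simp only [List.filter_append]
                rw [filter_replicate_pair, filter_pair_lit, filter_range'_pair x y hxy,
                  filter_range'_pair x y hxy, filter_range'_pair x y hxy]
                split_ifs <;> first | (exfalso; omega) | simp [h3]
              refine not_congr ?_
              rw [hfilter]
              refine (transfer hkm ([y]) (w.filter (fun z => z = x ∨ z = y)) y hv ?_).symm
              exact no_infix_const (a0 := y) hkm (by intro c hc; simp at hc; omega)
            · -- 9c : j < y
              have hfilter : (List.replicate (k - 2) i ++ List.range' (i + 1) (j - 1 - i) ++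
                List.range' (j + 1) (n - j) ++ [i, j] ++ List.range' (j + 1) (n - j) ++
                List.range' (i + 1) (n - i) ++ w).filter (fun z => z = x ∨ z = y)
                  = (([y, y]) ++ [y]) ++ w.filter (fun z => z = x ∨ z = y) := by
                simp only [List.filter_append]
                rw [filter_replicate_pair, filter_pair_lit, filter_range'_pair x y hxy,
                  filter_range'_pair x y hxy, filter_range'_pair x y hxy]
                split_ifs <;> first | (exfalso; omega) | simp
              refine not_congr ?_
              rw [hfilter]
              refine (transfer hkm ([y, y]) (w.filter (fun z => z = x ∨ z = y)) y hv ?_).symm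
              exact no_infix_const (a0 := y) hkm (by intro c hc; simp at hc; omega)
          · -- x = i
            rcases Nat.lt_trichotomy y j with h3 | h3 | h3
            · -- case 3 : x = i, i < y < j
              have hfilter : (List.replicate (k - 2) i ++ List.range' (i + 1) (j - 1 - i) ++
                List.range' (j + 1) (n - j) ++ [i, j] ++ List.range' (j + 1) (n - j) ++
                List.range' (i + 1) (n - i) ++ w).filter (fun z => z = x ∨ z = y)
                  = ((List.replicate (k - 2) x ++ [y, x]) ++ [y]) ++ w.filter (fun z => z = x ∨ z = y) := by
                simp only [List.filter_append]
                rw [filter_replicate_pair, filter_pair_lit, filter_range'_pair x y hxy,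
                  filter_range'_pair x y hxy, filter_range'_pair x y hxy]
                split_ifs <;> first | (exfalso; omega) | simp [h2]
              refine not_congr ?_
              rw [hfilter]
              refine (transfer hkm (List.replicate (k - 2) x ++ [y, x]) (w.filter (fun z => z = x ∨ z = y)) y hv ?_).symm
              intro a b hab hinf
              rw [show (k : ℕ) - 1 = (k - 2) + 1 from by omega,
                show ((List.replicate (k - 2) x ++ [y, x]) ++ [y]) = List.replicate (k - 2) x ++ y :: [x, y] from by simp] at hinf
              exact no_infix_case34 (by omega) hxy [x, y]
                (by intro c hc; simp at hc; omega)
                (by simp [List.count_cons]; omega) a b hab hinf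
            · -- excluded : x = i, y = j
              exact absurd ⟨h2, h3⟩ hA
            · -- case 4 : x = i, j < y
              have hfilter : (List.replicate (k - 2) i ++ List.range' (i + 1) (j - 1 - i) ++
                List.range' (j + 1) (n - j) ++ [i, j] ++ List.range' (j + 1) (n - j) ++
                List.range' (i + 1) (n - i) ++ w).filter (fun z => z = x ∨ z = y)
                  = ((List.replicate (k - 2) x ++ [y, x, y]) ++ [y]) ++ w.filter (fun z => z = x ∨ z = y) := by
                simp only [List.filter_append]
                rw [filter_replicate_pair, filter_pair_lit, filter_range'_pair x y hxy,
                  filter_range'_pair x y hxy, filter_range'_pair x y hxy]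
                split_ifs <;> first | (exfalso; omega) | simp [h2]
              refine not_congr ?_
              rw [hfilter]
              refine (transfer hkm (List.replicate (k - 2) x ++ [y, x, y]) (w.filter (fun z => z = x ∨ z = y)) y hv ?_).symm
              intro a b hab hinf
              rw [show (k : ℕ) - 1 = (k - 2) + 1 from by omega,
                show ((List.replicate (k - 2) x ++ [y, x, y]) ++ [y]) = List.replicate (k - 2) x ++ y :: [x, y, y] from by simp] at hinf
              exact no_infix_case34 (by omega) hxy [x, y, y]
                (by intro c hc; simp at hc; omega)
                (by simp [List.count_cons]; omega) a b hab hinf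
          · -- i < x
            rcases Nat.lt_trichotomy x j with h3 | h3 | h3
            · -- i < x < j
              rcases Nat.lt_trichotomy y j with h4 | h4 | h4
              · -- case 5 : y < j
                have hfilter : (List.replicate (k - 2) i ++ List.range' (i + 1) (j - 1 - i) ++
                  List.range' (j + 1) (n - j) ++ [i, j] ++ List.range' (j + 1) (n - j) ++
                  List.range' (i + 1) (n - i) ++ w).filter (fun z => z = x ∨ z = y)
                    = (([x, y, x]) ++ [y]) ++ w.filter (fun z => z = x ∨ z = y) := by
                  simp only [List.filter_append]
                  rw [filter_replicate_pair, filter_pair_lit, filter_range'_pair x y hxy,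
                    filter_range'_pair x y hxy, filter_range'_pair x y hxy]
                  split_ifs <;> first | (exfalso; omega) | simp
                refine not_congr ?_
                rw [hfilter]
                refine (transfer hkm ([x, y, x]) (w.filter (fun z => z = x ∨ z = y)) y hv ?_).symm
                exact no_infix_alt (by omega) hxy (by intro c hc; simp at hc; omega)
                  (by simp [List.Chain', List.isChain_cons_cons]; omega)
              · -- case 5b : y = j
                have hfilter : (List.replicate (k - 2) i ++ List.range' (i + 1) (j - 1 - i) ++
                  List.range' (j + 1) (n - j) ++ [i, j] ++ List.range' (j + 1) (n - j) ++
                  List.range' (i + 1) (n - i) ++ w).filter (fun z => z = x ∨ z = y)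
                    = (([x, y, x]) ++ [y]) ++ w.filter (fun z => z = x ∨ z = y) := by
                  simp only [List.filter_append]
                  rw [filter_replicate_pair, filter_pair_lit, filter_range'_pair x y hxy,
                    filter_range'_pair x y hxy, filter_range'_pair x y hxy]
                  split_ifs <;> first | (exfalso; omega) | simp [h4]
                refine not_congr ?_
                rw [hfilter]
                refine (transfer hkm ([x, y, x]) (w.filter (fun z => z = x ∨ z = y)) y hv ?_).symm
                exact no_infix_alt (by omega) hxy (by intro c hc; simp at hc; omega)
                  (by simp [List.Chain', List.isChain_cons_cons]; omega)
              · -- case 6 : j < y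
                have hfilter : (List.replicate (k - 2) i ++ List.range' (i + 1) (j - 1 - i) ++
                  List.range' (j + 1) (n - j) ++ [i, j] ++ List.range' (j + 1) (n - j) ++
                  List.range' (i + 1) (n - i) ++ w).filter (fun z => z = x ∨ z = y)
                    = (([x, y, y, x]) ++ [y]) ++ w.filter (fun z => z = x ∨ z = y) := by
                  simp only [List.filter_append]
                  rw [filter_replicate_pair, filter_pair_lit, filter_range'_pair x y hxy,
                    filter_range'_pair x y hxy, filter_range'_pair x y hxy]
                  split_ifs <;> first | (exfalso; omega) | simp
                refine not_congr ?_
                rw [hfilter]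
                refine (transfer hkm ([x, y, y, x]) (w.filter (fun z => z = x ∨ z = y)) y hv ?_).symm
                exact no_infix_alt (by omega) hxy (by intro c hc; simp at hc; omega)
                  (by simp [List.Chain', List.isChain_cons_cons]; omega)
            · -- case 7 : x = j
              have hfilter : (List.replicate (k - 2) i ++ List.range' (i + 1) (j - 1 - i) ++
                List.range' (j + 1) (n - j) ++ [i, j] ++ List.range' (j + 1) (n - j) ++
                List.range' (i + 1) (n - i) ++ w).filter (fun z => z = x ∨ z = y)
                  = (([y, x, y, x]) ++ [y]) ++ w.filter (fun z => z = x ∨ z = y) := by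
                simp only [List.filter_append]
                rw [filter_replicate_pair, filter_pair_lit, filter_range'_pair x y hxy,
                  filter_range'_pair x y hxy, filter_range'_pair x y hxy]
                split_ifs <;> first | (exfalso; omega) | simp [h3]
              refine not_congr ?_
              rw [hfilter]
              refine (transfer hkm ([y, x, y, x]) (w.filter (fun z => z = x ∨ z = y)) y hv ?_).symm
              exact no_infix_alt (by omega) hxy (by intro c hc; simp at hc; omega)
                (by simp [List.Chain', List.isChain_cons_cons]; omega)
            · -- case 8 : j < x
              have hfilter : (List.replicate (k - 2) i ++ List.range' (i + 1) (j - 1 - i) ++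
                List.range' (j + 1) (n - j) ++ [i, j] ++ List.range' (j + 1) (n - j) ++
                List.range' (i + 1) (n - i) ++ w).filter (fun z => z = x ∨ z = y)
                  = (([x, y, x, y, x]) ++ [y]) ++ w.filter (fun z => z = x ∨ z = y) := by
                simp only [List.filter_append]
                rw [filter_replicate_pair, filter_pair_lit, filter_range'_pair x y hxy,
                  filter_range'_pair x y hxy, filter_range'_pair x y hxy]
                split_ifs <;> first | (exfalso; omega) | simp
              refine not_congr ?_
              rw [hfilter]
              refine (transfer hkm ([x, y, x, y, x]) (w.filter (fun z => z = x ∨ z = y)) y hv ?_).symm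
              exact no_infix_alt (by omega) hxy (by intro c hc; simp at hc; omega)
                (by simp [List.Chain', List.isChain_cons_cons]; omega)
    intro x hx y hy hxy
    rw [Finset.mem_Icc] at hx hy
    rcases Nat.lt_or_ge x y with hlt | hge
    · exact key x y hx.1 hx.2 hy.1 hy.2 hlt
    · have hlt : y < x := by omega
      have hswap := key y x hy.1 hy.2 hx.1 hx.2 hlt
      have hfe : (List.replicate (k - 2) i ++ List.range' (i + 1) (j - 1 - i) ++
              List.range' (j + 1) (n - j) ++ [i, j] ++ List.range' (j + 1) (n - j) ++
              List.range' (i + 1) (n - i) ++ w).filter (fun z => z = x ∨ z = y)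
          = (List.replicate (k - 2) i ++ List.range' (i + 1) (j - 1 - i) ++
              List.range' (j + 1) (n - j) ++ [i, j] ++ List.range' (j + 1) (n - j) ++
              List.range' (i + 1) (n - i) ++ w).filter (fun z => z = y ∨ z = x) := by
        apply List.filter_congr
        intro c _
        exact decide_eq_decide.mpr or_comm
      rw [hfe]
      refine Iff.trans ?_ hswap
      constructor
      · rintro ⟨h1, h2⟩
        exact ⟨hsym h1, by omega⟩
      · rintro ⟨h1, h2⟩
        exact ⟨hsym h1, by omega⟩
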